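/- Let n ≥ 1 and h ≥ 1 be natural numbers and let γ be a real number with 0 < γ < n/2. Define μ_s := Γ(s + n/2 + γ)/Γ(s + n/2 − γ) for s ∈ {h−1, h, h+1}. Then (μ_{h+1} − μ_h) + (h/(1 − n − 2h))·(μ_{h+1} − μ_{h−1}) = γ·(n + 2γ − 2)·Γ(h + n/2 + γ − 1)/Γ(h + n/2 − γ + 1). -/

import Mathlib

set_option maxHeartbeats 1000000


open Real

/-- the spectral content of the commutator identity
`Σ_j x_j[P_{2γ}, x_j] = γ(n + 2γ − 2)P_{2(γ−1)}` on the round sphere `S^n`,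
where `μ_s = Γ(s + n/2 + γ)/Γ(s + n/2 − γ)`. -/
theorem stmt_2 (n h : ℕ) (hn : 1 ≤ n) (hh : 1 ≤ h) (γ : ℝ)
    (hγ0 : 0 < γ) (hγn : γ < (n : ℝ) / 2) :
    (Gamma (((h : ℝ) + 1) + (n : ℝ) / 2 + γ) / Gamma (((h : ℝ) + 1) + (n : ℝ) / 2 - γ) -
        Gamma ((h : ℝ) + (n : ℝ) / 2 + γ) / Gamma ((h : ℝ) + (n : ℝ) / 2 - γ)) +
      ((h : ℝ) / (1 - (n : ℝ) - 2 * (h : ℝ))) *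
        (Gamma (((h : ℝ) + 1) + (n : ℝ) / 2 + γ) / Gamma (((h : ℝ) + 1) + (n : ℝ) / 2 - γ) -
          Gamma (((h : ℝ) - 1) + (n : ℝ) / 2 + γ) / Gamma (((h : ℝ) - 1) + (n : ℝ) / 2 - γ)) =
    γ * ((n : ℝ) + 2 * γ - 2) *
      (Gamma ((h : ℝ) + (n : ℝ) / 2 + γ - 1) / Gamma ((h : ℝ) + (n : ℝ) / 2 - γ + 1)) := by
  have hh' : (1 : ℝ) ≤ (h : ℝ) := by exact_mod_cast hh
  have hn' : (1 : ℝ) ≤ (n : ℝ) := by exact_mod_cast hn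
  set α : ℝ := (h : ℝ) - 1 + (n : ℝ) / 2 + γ with hα_def
  set β : ℝ := (h : ℝ) - 1 + (n : ℝ) / 2 - γ with hβ_def
  have hα : 0 < α := by
    have : (0:ℝ) < (n:ℝ)/2 := by linarith
    simp only [hα_def]; linarith
  have hβ : 0 < β := by simp only [hβ_def]; linarith
  have hα1 : 0 < α + 1 := by linarith
  have hβ1 : 0 < β + 1 := by linarith
  have e1 : Gamma (((h : ℝ) + 1) + (n : ℝ) / 2 + γ) = (α + 1) * α * Gamma α := by
    have harg : ((h : ℝ) + 1) + (n : ℝ) / 2 + γ = (α + 1) + 1 := by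
      simp only [hα_def]; ring
    rw [harg, Gamma_add_one hα1.ne', Gamma_add_one hα.ne']; ring
  have e2 : Gamma (((h : ℝ) + 1) + (n : ℝ) / 2 - γ) = (β + 1) * β * Gamma β := by
    have harg : ((h : ℝ) + 1) + (n : ℝ) / 2 - γ = (β + 1) + 1 := by
      simp only [hβ_def]; ring
    rw [harg, Gamma_add_one hβ1.ne', Gamma_add_one hβ.ne']; ring
  have e3 : Gamma ((h : ℝ) + (n : ℝ) / 2 + γ) = α * Gamma α := by
    have harg : (h : ℝ) + (n : ℝ) / 2 + γ = α + 1 := by simp only [hα_def]; ring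
    rw [harg, Gamma_add_one hα.ne']
  have e4 : Gamma ((h : ℝ) + (n : ℝ) / 2 - γ) = β * Gamma β := by
    have harg : (h : ℝ) + (n : ℝ) / 2 - γ = β + 1 := by simp only [hβ_def]; ring
    rw [harg, Gamma_add_one hβ.ne']
  have e5 : Gamma (((h : ℝ) - 1) + (n : ℝ) / 2 + γ) = Gamma α := by
    congr 1
  have e6 : Gamma (((h : ℝ) - 1) + (n : ℝ) / 2 - γ) = Gamma β := by
    congr 1
  have e7 : Gamma ((h : ℝ) + (n : ℝ) / 2 + γ - 1) = Gamma α := by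
    congr 1; simp only [hα_def]; ring
  have e8 : Gamma ((h : ℝ) + (n : ℝ) / 2 - γ + 1) = (β + 1) * β * Gamma β := by
    have harg : (h : ℝ) + (n : ℝ) / 2 - γ + 1 = (β + 1) + 1 := by
      simp only [hβ_def]; ring
    rw [harg, Gamma_add_one hβ1.ne', Gamma_add_one hβ.ne']; ring
  have hGα : 0 < Gamma α := Gamma_pos_of_pos hα
  have hGβ : 0 < Gamma β := Gamma_pos_of_pos hβ
  have hd : (1 : ℝ) - (n : ℝ) - 2 * (h : ℝ) ≠ 0 := by
    intro hc; nlinarith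
  rw [e1, e2, e3, e4, e5, e6, e7, e8]
  obtain ⟨G, hG⟩ : ∃ G, Gamma α = G := ⟨_, rfl⟩
  obtain ⟨H, hH⟩ : ∃ H, Gamma β = H := ⟨_, rfl⟩
  rw [hG, hH]
  have hH0 : H ≠ 0 := by rw [← hH]; exact hGβ.ne'
  have hG0 : G ≠ 0 := by rw [← hG]; exact hGα.ne'
  have hb : β ≠ 0 := hβ.ne'
  have hb1 : β + 1 ≠ 0 := hβ1.ne'
  field_simp
  rw [hα_def, hβ_def]
  have hd' : (1 - (n:ℝ) - 2 * (h:ℝ))⁻¹ * (1 - (n:ℝ) - 2 * (h:ℝ)) = 1 := inv_mul_cancel₀ hd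
  linear_combination (-2 * (h:ℝ) * γ) * hd'
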